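/- In the Gauss-diagram Ω2a configuration, for any chord d not involved in the move, the contributions of the two move chords c₁, c₂ to Ind'(d) cancel: either both relevant endpoints of c₁ and c₂ lie in left(d) or both lie outside, and their signs are opposite, so Ind'(d) computed before and after removing the pair c₁, c₂ agree. -/

import Mathlib

open Finset

/-- in the Ω2a configuration, the contributions of the two move chords
`c₁, c₂` to `Ind'(d)` of any chord `d ∉ {c₁, c₂}` cancel.  The four endpoints
`h₁, h₂, t₁, t₂` of `c₁` and `c₂` come in two adjacent pairs with opposite signs, and
the members of each adjacent pair lie on the same side of `left d`.  Hence `Ind'(d)`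
equals the index computed after deleting the pair `c₁, c₂`. -/
theorem omega2a_pair_no_contribution {E C : Type} [Fintype E] [DecidableEq E] [DecidableEq C]
    (chordOf : E → C) (sign : E → ℤ) (leftd : Finset E) (d c₁ c₂ : C)
    (h₁ h₂ t₁ t₂ : E)
    (hd₁ : d ≠ c₁) (hd₂ : d ≠ c₂)
    (hch₁ : chordOf h₁ = c₁) (hch₂ : chordOf h₂ = c₂)
    (hct₁ : chordOf t₁ = c₁) (hct₂ : chordOf t₂ = c₂)
    (hall : univ.filter (fun e => chordOf e = c₁ ∨ chordOf e = c₂) = {h₁, h₂, t₁, t₂})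
    (hdistinct : ({h₁, h₂, t₁, t₂} : Finset E).card = 4)
    (hsignh : sign h₁ = - sign h₂) (hsignt : sign t₁ = - sign t₂)
    (hmemh : h₁ ∈ leftd ↔ h₂ ∈ leftd) (hmemt : t₁ ∈ leftd ↔ t₂ ∈ leftd) :
    ∑ e ∈ leftd.filter (fun e => chordOf e ≠ d), sign e =
      ∑ e ∈ leftd.filter (fun e => chordOf e ≠ d ∧ chordOf e ≠ c₁ ∧ chordOf e ≠ c₂),
        sign e := by
  -- membership characterization of the four endpoints
  have hS : ∀ e, (chordOf e = c₁ ∨ chordOf e = c₂) ↔ e ∈ ({h₁, h₂, t₁, t₂} : Finset E) := by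
    intro e
    constructor
    · intro h
      rw [← hall]; simp [h]
    · intro h
      simp only [Finset.mem_insert, Finset.mem_singleton] at h
      rcases h with rfl | rfl | rfl | rfl
      · exact Or.inl hch₁
      · exact Or.inr hch₂
      · exact Or.inl hct₁
      · exact Or.inr hct₂
  -- distinctness facts needed to sum over {h₁, h₂, t₁, t₂}
  have n1 : h₁ ∉ ({h₂, t₁, t₂} : Finset E) := by
    intro hmem
    rw [show ({h₁, h₂, t₁, t₂} : Finset E) = {h₂, t₁, t₂} from Finset.insert_eq_self.mpr hmem]
      at hdistinct
    have a := Finset.card_insert_le h₂ ({t₁, t₂} : Finset E)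
    have b := Finset.card_insert_le t₁ ({t₂} : Finset E)
    simp only [Finset.card_singleton] at a b
    omega
  have n2 : h₂ ∉ ({t₁, t₂} : Finset E) := by
    intro hmem
    rw [show ({h₁, h₂, t₁, t₂} : Finset E) = insert h₁ {t₁, t₂} by
      rw [Finset.insert_eq_self.mpr hmem]] at hdistinct
    have a := Finset.card_insert_le h₁ ({t₁, t₂} : Finset E)
    have b := Finset.card_insert_le t₁ ({t₂} : Finset E)
    simp only [Finset.card_singleton] at a b
    omega
  have n3 : t₁ ∉ ({t₂} : Finset E) := by
    intro hmem
    rw [show ({h₁, h₂, t₁, t₂} : Finset E) = insert h₁ (insert h₂ {t₂}) by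
      rw [Finset.insert_eq_self.mpr hmem]] at hdistinct
    have a := Finset.card_insert_le h₁ (insert h₂ ({t₂} : Finset E))
    have b := Finset.card_insert_le h₂ ({t₂} : Finset E)
    simp only [Finset.card_singleton] at a b
    omega
  -- the contribution of the four endpoints vanishes
  have key : ∑ e ∈ leftd.filter (fun e => chordOf e = c₁ ∨ chordOf e = c₂), sign e = 0 := by
    have hset : leftd.filter (fun e => chordOf e = c₁ ∨ chordOf e = c₂)
        = ({h₁, h₂, t₁, t₂} : Finset E).filter (· ∈ leftd) := by
      ext e
      simp only [Finset.mem_filter]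
      rw [hS e]
      tauto
    rw [hset, Finset.sum_filter, Finset.sum_insert n1, Finset.sum_insert n2,
      Finset.sum_insert n3, Finset.sum_singleton]
    by_cases H : h₁ ∈ leftd
    · have H2 : h₂ ∈ leftd := hmemh.mp H
      by_cases T : t₁ ∈ leftd
      · have T2 : t₂ ∈ leftd := hmemt.mp T
        simp [H, H2, T, T2, hsignh, hsignt]
      · have T2 : t₂ ∉ leftd := fun h => T (hmemt.mpr h)
        simp [H, H2, T, T2, hsignh]
    · have H2 : h₂ ∉ leftd := fun h => H (hmemh.mpr h)
      by_cases T : t₁ ∈ leftd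
      · have T2 : t₂ ∈ leftd := hmemt.mp T
        simp [H, H2, T, T2, hsignt]
      · have T2 : t₂ ∉ leftd := fun h => T (hmemt.mpr h)
        simp [H, H2, T, T2]
  -- split the left-hand sum
  have split := Finset.sum_filter_add_sum_filter_not
    (leftd.filter (fun e => chordOf e ≠ d)) (fun e => chordOf e = c₁ ∨ chordOf e = c₂) sign
  have e1 : (leftd.filter (fun e => chordOf e ≠ d)).filter
      (fun e => chordOf e = c₁ ∨ chordOf e = c₂)
      = leftd.filter (fun e => chordOf e = c₁ ∨ chordOf e = c₂) := by
    have himp : ∀ e : E, (chordOf e = c₁ ∨ chordOf e = c₂) → chordOf e ≠ d := by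
      rintro e (h | h) <;> rw [h]
      · exact fun hh => hd₁ hh.symm
      · exact fun hh => hd₂ hh.symm
    ext e
    simp only [Finset.mem_filter, Finset.filter_filter]
    have := himp e
    tauto
  have e2 : (leftd.filter (fun e => chordOf e ≠ d)).filter
      (fun e => ¬(chordOf e = c₁ ∨ chordOf e = c₂))
      = leftd.filter (fun e => chordOf e ≠ d ∧ chordOf e ≠ c₁ ∧ chordOf e ≠ c₂) := by
    ext e
    simp only [Finset.mem_filter, Finset.filter_filter]
    tauto
  rw [e1, e2, key] at split
  linarith
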